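/- Let X^ε be an asymptotically regular continuous-time Markov chain on finite S (N ≥ 2) with irreducible skeleton chain, let μ(j) = lim_{ε↓0} μ(j,ε) be the limiting stationary distribution, and let t(ε) satisfy T̄(ε) = o(t(ε)) as ε ↓ 0, where T̄(ε) = ∑_i λ(i) T(i,ε). Then for all i, j ∈ S, lim_{ε↓0} P_i(X^ε_{t(ε)} = j) = μ(j). -/

import Mathlib

open Filter Topology Finset

/-- The generator matrix of the chain with rates `q i j` (`i ≠ j`). -/
noncomputable def generator {N : ℕ} (q : Fin N → Fin N → ℝ) :
    Matrix (Fin N) (Fin N) ℝ :=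
  Matrix.of fun i j => if i = j then -(∑ k ∈ Finset.univ.erase i, q i k) else q i j

section Aux

open NormedSpace

variable {N : ℕ}

noncomputable def entryLM (i j : Fin N) : Matrix (Fin N) (Fin N) ℝ →ₗ[ℝ] ℝ where
  toFun M := M i j
  map_add' _ _ := rfl
  map_smul' _ _ := rfl

theorem exp_entry_eq (M : Matrix (Fin N) (Fin N) ℝ) (i j : Fin N) :
    exp M i j = ∑' n : ℕ, ((Nat.factorial n : ℕ) : ℝ)⁻¹ * (M ^ n) i j := by
  letI : SeminormedRing (Matrix (Fin N) (Fin N) ℝ) := Matrix.linftyOpSemiNormedRing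
  letI : NormedRing (Matrix (Fin N) (Fin N) ℝ) := Matrix.linftyOpNormedRing
  letI : NormedAlgebra ℝ (Matrix (Fin N) (Fin N) ℝ) := Matrix.linftyOpNormedAlgebra
  have hs : Summable (fun n : ℕ => ((Nat.factorial n : ℕ) : ℝ)⁻¹ • M ^ n) :=
    expSeries_summable' M
  have h := ((entryLM i j).toContinuousLinearMap :
      Matrix (Fin N) (Fin N) ℝ →L[ℝ] ℝ).map_tsum hs
  have h2 : exp M = ∑' n : ℕ, ((Nat.factorial n : ℕ) : ℝ)⁻¹ • M ^ n := by
    rw [exp_eq_tsum ℝ]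
  rw [h2]
  exact h

theorem pow_entry_nonneg {M : Matrix (Fin N) (Fin N) ℝ} (h : ∀ i j, 0 ≤ M i j)
    (n : ℕ) (i j : Fin N) : 0 ≤ (M ^ n) i j := by
  induction n generalizing i j with
  | zero => simp [Matrix.one_apply]; split <;> norm_num
  | succ n ih =>
    rw [pow_succ, Matrix.mul_apply]
    exact Finset.sum_nonneg fun m _ => mul_nonneg (ih i m) (h m j)

theorem exp_entry_nonneg_of_nonneg {M : Matrix (Fin N) (Fin N) ℝ}
    (h : ∀ i j, 0 ≤ M i j) (i j : Fin N) : 0 ≤ exp M i j := by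
  rw [exp_entry_eq]
  exact tsum_nonneg fun n => mul_nonneg (by positivity) (pow_entry_nonneg h n i j)

theorem exp_entry_nonneg' {Q : Matrix (Fin N) (Fin N) ℝ}
    (hod : ∀ i j, i ≠ j → 0 ≤ Q i j) {s : ℝ} (hs : 0 ≤ s) (i j : Fin N) :
    0 ≤ exp (s • Q) i j := by
  classical
  set Λ : ℝ := ∑ m, |Q m m| with hΛ
  have hcomm : Commute (s • Q) ((s * Λ) • (1 : Matrix (Fin N) (Fin N) ℝ)) := by
    exact (Commute.one_right _).smul_right _
  have key : exp (s • (Q + Λ • 1)) = exp (s • Q) * exp ((s * Λ) • 1) := by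
    rw [smul_add, smul_smul, ← Matrix.exp_add_of_commute _ _ hcomm]
  have hexp1 : exp ((s * Λ) • (1 : Matrix (Fin N) (Fin N) ℝ))
      = Real.exp (s * Λ) • 1 := by
    letI : SeminormedRing (Matrix (Fin N) (Fin N) ℝ) := Matrix.linftyOpSemiNormedRing
    letI : NormedRing (Matrix (Fin N) (Fin N) ℝ) := Matrix.linftyOpNormedRing
    letI : NormedAlgebra ℝ (Matrix (Fin N) (Fin N) ℝ) := Matrix.linftyOpNormedAlgebra
    rw [← Algebra.algebraMap_eq_smul_one, ← Algebra.algebraMap_eq_smul_one, Real.exp_eq_exp_ℝ]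
    exact (algebraMap_exp_comm (s * Λ)).symm
  have hnn : ∀ i' j', 0 ≤ (s • (Q + Λ • 1)) i' j' := by
    intro i' j'
    rcases eq_or_ne i' j' with rfl | hne
    · have h1 : |Q i' i'| ≤ Λ := by
        rw [hΛ]
        exact Finset.single_le_sum (f := fun m => |Q m m|) (fun m _ => abs_nonneg _)
          (Finset.mem_univ i')
      have : 0 ≤ Q i' i' + Λ := by
        have := neg_abs_le (Q i' i'); linarith
      simpa [Matrix.smul_apply, Matrix.add_apply, Matrix.one_apply, smul_eq_mul]
        using mul_nonneg hs this
    · simpa [Matrix.smul_apply, Matrix.add_apply, Matrix.one_apply, hne, smul_eq_mul]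
        using mul_nonneg hs (hod i' j' hne)
  have h0 : 0 ≤ exp (s • (Q + Λ • 1)) i j := exp_entry_nonneg_of_nonneg hnn i j
  rw [key, hexp1] at h0
  have : (exp (s • Q) * Real.exp (s * Λ) • 1) i j
      = Real.exp (s * Λ) * exp (s • Q) i j := by
    simp [Matrix.mul_smul, Matrix.smul_apply, Matrix.mul_one, smul_eq_mul, mul_comm]
  rw [this] at h0
  nlinarith [Real.exp_pos (s * Λ)]

noncomputable def rowFunLM (v : Fin N → ℝ) (j : Fin N) :
    Matrix (Fin N) (Fin N) ℝ →ₗ[ℝ] ℝ where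
  toFun M := ∑ i, v i * M i j
  map_add' A B := by simp [Matrix.add_apply, mul_add, Finset.sum_add_distrib]
  map_smul' c A := by
    simp only [Matrix.smul_apply, smul_eq_mul, RingHom.id_apply, Finset.mul_sum]
    exact Finset.sum_congr rfl fun x _ => by ring

noncomputable def sumRowLM (i : Fin N) :
    Matrix (Fin N) (Fin N) ℝ →ₗ[ℝ] ℝ where
  toFun M := ∑ j, M i j
  map_add' A B := by simp [Matrix.add_apply, Finset.sum_add_distrib]
  map_smul' c A := by simp [Matrix.smul_apply, smul_eq_mul, Finset.mul_sum]

theorem exp_row_sum {M : Matrix (Fin N) (Fin N) ℝ}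
    (hrow : ∀ i, ∑ j, M i j = 0) (i : Fin N) : ∑ j, exp M i j = 1 := by
  letI : SeminormedRing (Matrix (Fin N) (Fin N) ℝ) := Matrix.linftyOpSemiNormedRing
  letI : NormedRing (Matrix (Fin N) (Fin N) ℝ) := Matrix.linftyOpNormedRing
  letI : NormedAlgebra ℝ (Matrix (Fin N) (Fin N) ℝ) := Matrix.linftyOpNormedAlgebra
  have hs : Summable (fun n : ℕ => ((Nat.factorial n : ℕ) : ℝ)⁻¹ • M ^ n) :=
    expSeries_summable' M
  have h := ((sumRowLM i).toContinuousLinearMap :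
      Matrix (Fin N) (Fin N) ℝ →L[ℝ] ℝ).map_tsum hs
  have h2 : exp M = ∑' n : ℕ, ((Nat.factorial n : ℕ) : ℝ)⁻¹ • M ^ n := by
    rw [exp_eq_tsum ℝ]
  have hpow : ∀ n : ℕ, (sumRowLM i) (((Nat.factorial n : ℕ) : ℝ)⁻¹ • M ^ n)
      = if n = 0 then 1 else 0 := by
    intro n
    match n with
    | 0 => simp [sumRowLM, Matrix.one_apply]
    | (k+1) =>
      simp only [map_smul, smul_eq_mul]
      have : (sumRowLM i) (M ^ (k+1)) = 0 := by
        simp only [sumRowLM, LinearMap.coe_mk, AddHom.coe_mk, pow_succ, Matrix.mul_apply]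
        rw [Finset.sum_comm]
        simp [← Finset.mul_sum, hrow]
      simp [this]
  have h' : (sumRowLM i) (∑' n : ℕ, ((Nat.factorial n : ℕ) : ℝ)⁻¹ • M ^ n)
      = ∑' n : ℕ, (sumRowLM i) (((Nat.factorial n : ℕ) : ℝ)⁻¹ • M ^ n) := h
  have : (sumRowLM i) (exp M) = 1 := by
    rw [h2, h']
    have := tsum_congr (L := SummationFilter.unconditional ℕ) (f := fun n => (sumRowLM i) (((Nat.factorial n : ℕ) : ℝ)⁻¹ • M ^ n)) hpow
    rw [this, tsum_eq_single 0 (by intro b hb; simp [hb])]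
    simp
  simpa [sumRowLM] using this

theorem exp_vecMul_eq {M : Matrix (Fin N) (Fin N) ℝ} {v : Fin N → ℝ}
    (hv : ∀ j, ∑ i, v i * M i j = 0) (j : Fin N) :
    ∑ i, v i * exp M i j = v j := by
  letI : SeminormedRing (Matrix (Fin N) (Fin N) ℝ) := Matrix.linftyOpSemiNormedRing
  letI : NormedRing (Matrix (Fin N) (Fin N) ℝ) := Matrix.linftyOpNormedRing
  letI : NormedAlgebra ℝ (Matrix (Fin N) (Fin N) ℝ) := Matrix.linftyOpNormedAlgebra
  have hs : Summable (fun n : ℕ => ((Nat.factorial n : ℕ) : ℝ)⁻¹ • M ^ n) :=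
    expSeries_summable' M
  have h := ((rowFunLM v j).toContinuousLinearMap :
      Matrix (Fin N) (Fin N) ℝ →L[ℝ] ℝ).map_tsum hs
  have h2 : exp M = ∑' n : ℕ, ((Nat.factorial n : ℕ) : ℝ)⁻¹ • M ^ n := by
    rw [exp_eq_tsum ℝ]
  have hpow : ∀ n : ℕ, (rowFunLM v j) (((Nat.factorial n : ℕ) : ℝ)⁻¹ • M ^ n)
      = if n = 0 then v j else 0 := by
    intro n
    match n with
    | 0 => simp [rowFunLM, Matrix.one_apply]
    | (k+1) =>
      simp only [map_smul, smul_eq_mul]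
      have : (rowFunLM v j) (M ^ (k+1)) = 0 := by
        simp only [rowFunLM, LinearMap.coe_mk, AddHom.coe_mk, pow_succ', Matrix.mul_apply]
        simp_rw [Finset.mul_sum]
        rw [Finset.sum_comm]
        have hz : ∀ j1, ∑ x, v x * (M x j1 * (M ^ k) j1 j) = 0 := by
          intro j1
          have : ∑ x, v x * (M x j1 * (M ^ k) j1 j)
              = (∑ x, v x * M x j1) * (M ^ k) j1 j := by
            rw [Finset.sum_mul]; exact Finset.sum_congr rfl fun x _ => by ring
          rw [this, hv j1, zero_mul]
        simp [hz]
      simp [this]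
  have h' : (rowFunLM v j) (∑' n : ℕ, ((Nat.factorial n : ℕ) : ℝ)⁻¹ • M ^ n)
      = ∑' n : ℕ, (rowFunLM v j) (((Nat.factorial n : ℕ) : ℝ)⁻¹ • M ^ n) := h
  have : (rowFunLM v j) (exp M) = v j := by
    rw [h2, h']
    have := tsum_congr (L := SummationFilter.unconditional ℕ) (f := fun n => (rowFunLM v j) (((Nat.factorial n : ℕ) : ℝ)⁻¹ • M ^ n)) hpow
    rw [this, tsum_eq_single 0 (by intro b hb; simp [hb])]
    simp
  simpa [rowFunLM] using this

theorem entry_hasDerivAt (Q : Matrix (Fin N) (Fin N) ℝ) (i j : Fin N) (s : ℝ) :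
    HasDerivAt (fun u : ℝ => exp (u • Q) i j)
      ((Q * exp (s • Q)) i j) s := by
  letI : SeminormedRing (Matrix (Fin N) (Fin N) ℝ) := Matrix.linftyOpSemiNormedRing
  letI : NormedRing (Matrix (Fin N) (Fin N) ℝ) := Matrix.linftyOpNormedRing
  letI : NormedAlgebra ℝ (Matrix (Fin N) (Fin N) ℝ) := Matrix.linftyOpNormedAlgebra
  exact (entryLM i j).toContinuousLinearMap.hasFDerivAt.comp_hasDerivAt s
    (hasDerivAt_exp_smul_const' Q s)

theorem le_of_deriv_nonneg {A B : ℝ} (hAB : A ≤ B) (φ φ' : ℝ → ℝ)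
    (hd : ∀ u, HasDerivAt φ (φ' u) u)
    (h0 : ∀ u, A ≤ u → u ≤ B → 0 ≤ φ' u) : φ A ≤ φ B := by
  have hmono : MonotoneOn φ (Set.Icc A B) := by
    apply monotoneOn_of_deriv_nonneg (convex_Icc A B)
    · exact fun u _ => (hd u).continuousAt.continuousWithinAt
    · exact fun u _ => (hd u).differentiableAt.differentiableWithinAt
    · intro x hx
      rw [interior_Icc] at hx
      rw [(hd x).deriv]
      exact h0 x hx.1.le hx.2.le
  exact hmono (Set.left_mem_Icc.2 hAB) (Set.right_mem_Icc.2 hAB) hAB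

theorem exp_diag_ge {Q : Matrix (Fin N) (Fin N) ℝ} (hod : ∀ i j, i ≠ j → 0 ≤ Q i j)
    (j : Fin N) {s : ℝ} (hs : 0 ≤ s) :
    Real.exp (Q j j * s) ≤ exp (s • Q) j j := by
  set qj : ℝ := -(Q j j) with hqj
  have hφ : ∀ u : ℝ, HasDerivAt (fun u => Real.exp (qj * u) * exp (u • Q) j j)
      (Real.exp (qj * u) * (∑ m ∈ univ.erase j, Q j m * exp (u • Q) m j)) u := by
    intro u
    have h1 : HasDerivAt (fun u : ℝ => Real.exp (qj * u)) (qj * Real.exp (qj * u)) u := by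
      have h := HasDerivAt.exp ((hasDerivAt_id u).const_mul qj)
      refine h.congr_deriv ?_
      show Real.exp (qj * u) * (qj * 1) = _; ring
    have h2 := entry_hasDerivAt Q j j u
    have h3 := h1.mul h2
    refine h3.congr_deriv ?_
    rw [Matrix.mul_apply, ← Finset.add_sum_erase _ _ (Finset.mem_univ j)]
    have hQjj : Q j j = -qj := by rw [hqj]; ring
    rw [hQjj]
    ring
  have key := le_of_deriv_nonneg hs _ _ hφ (fun u hu _ => by
    have : 0 ≤ ∑ m ∈ univ.erase j, Q j m * exp (u • Q) m j :=
      Finset.sum_nonneg fun m hm =>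
        mul_nonneg (hod j m (Finset.ne_of_mem_erase hm).symm) (exp_entry_nonneg' hod hu m j)
    positivity)
  simp only [mul_zero, Real.exp_zero, one_mul, zero_smul, exp_zero, Matrix.one_apply_eq] at key
  have hpos : (0:ℝ) < Real.exp (qj * s) := Real.exp_pos _
  have : Real.exp (Q j j * s) * Real.exp (qj * s) = 1 := by
    rw [← Real.exp_add]; simp [hqj]
  nlinarith [key, hpos]

theorem exp_step {Q : Matrix (Fin N) (Fin N) ℝ} (hod : ∀ i j, i ≠ j → 0 ≤ Q i j)
    {i m k : Fin N} (him : i ≠ m) {a s c : ℝ}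
    (ha : 0 < a) (has : a ≤ s) (hsa : 0 ≤ s - a) (hc : 0 ≤ c)
    (hqi : 0 < -(Q i i))
    (hg : ∀ u, s - a ≤ u → u ≤ s → c ≤ exp (u • Q) m k) :
    (1 - Real.exp (-(-(Q i i) * a))) * (Q i m / (-(Q i i))) * c
      ≤ exp (s • Q) i k := by
  set qi : ℝ := -(Q i i) with hqidef
  set b : ℝ := s - a with hbdef
  set p : ℝ := Q i m / qi with hpdef
  set ψ : ℝ → ℝ := fun u => p * c * (1 - Real.exp (-(qi * (u - b)))) with hψdef
  have hψd : ∀ u : ℝ, HasDerivAt ψ (qi * (p * c) - qi * ψ u) u := by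
    intro u
    have hin : HasDerivAt (fun u : ℝ => -(qi * (u - b))) (-qi) u := by
      have h := (((hasDerivAt_id u).sub_const b).const_mul qi).neg
      simp only [mul_one] at h
      exact h
    have hexp := (Real.hasDerivAt_exp (-(qi * (u - b)))).comp u hin
    have := ((hexp.const_sub 1).const_mul (p * c))
    refine this.congr_deriv ?_
    simp only [hψdef]
    ring
  have hφd : ∀ u : ℝ, HasDerivAt
      (fun u => Real.exp (qi * u) * (exp (u • Q) i k - ψ u))
      (Real.exp (qi * u) *
        ((∑ m' ∈ univ.erase i, Q i m' * exp (u • Q) m' k) - Q i m * c)) u := by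
    intro u
    have h1 : HasDerivAt (fun u : ℝ => Real.exp (qi * u)) (qi * Real.exp (qi * u)) u := by
      have h := HasDerivAt.exp ((hasDerivAt_id u).const_mul qi)
      refine h.congr_deriv ?_
      show Real.exp (qi * u) * (qi * 1) = _; ring
    have h2 := (entry_hasDerivAt Q i k u).sub (hψd u)
    have h3 := h1.mul h2
    refine h3.congr_deriv ?_
    simp only [Pi.sub_apply]
    rw [Matrix.mul_apply, ← Finset.add_sum_erase _ _ (Finset.mem_univ i)]
    have hqp : qi * p = Q i m := by
      rw [hpdef]; field_simp
    have hQii : Q i i = -qi := by rw [hqidef]; ring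
    rw [hQii]
    linear_combination -(c * Real.exp (qi * u)) * hqp
  have hmono := le_of_deriv_nonneg (show b ≤ s by rw [hbdef]; linarith) _ _ hφd ?_
  · have hb0 : ψ b = 0 := by simp [hψdef]
    have hfb : 0 ≤ exp (b • Q) i k := exp_entry_nonneg' hod hsa i k
    have hψs : ψ s = p * c * (1 - Real.exp (-(qi * a))) := by
      simp only [hψdef]
      rw [show s - b = a from by rw [hbdef]; ring]
    have h1 : 0 ≤ Real.exp (qi * b) * (exp (b • Q) i k - ψ b) := by
      rw [hb0, sub_zero]
      exact mul_nonneg (Real.exp_pos _).le hfb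
    have h2 := le_trans h1 hmono
    have hpos : (0:ℝ) < Real.exp (qi * s) := Real.exp_pos _
    have : ψ s ≤ exp (s • Q) i k := by nlinarith [h2, hpos]
    calc (1 - Real.exp (-(qi * a))) * p * c = ψ s := by rw [hψs]; ring
    _ ≤ exp (s • Q) i k := this
  · intro u hu1 hu2
    have hu0 : 0 ≤ u := le_trans hsa hu1
    have hsum : Q i m * c ≤ ∑ m' ∈ univ.erase i, Q i m' * exp (u • Q) m' k := by
      have hmem : m ∈ univ.erase i := Finset.mem_erase.2 ⟨(Ne.symm him), Finset.mem_univ m⟩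
      have hle : Q i m * c ≤ Q i m * exp (u • Q) m k :=
        mul_le_mul_of_nonneg_left (hg u hu1 hu2) (hod i m him)
      refine le_trans hle (Finset.single_le_sum (f := fun m' => Q i m' * exp (u • Q) m' k)
        (fun m' hm' => mul_nonneg (hod i m' (Finset.ne_of_mem_erase hm').symm)
          (exp_entry_nonneg' hod hu0 m' k)) hmem)
    have : 0 ≤ (∑ m' ∈ univ.erase i, Q i m' * exp (u • Q) m' k) - Q i m * c := by
      linarith
    positivity

theorem path_bound {Q : Matrix (Fin N) (Fin N) ℝ} (hod : ∀ i j, i ≠ j → 0 ≤ Q i j)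
    {k : Fin N} {β a S c : ℝ} (hβ : 0 ≤ β) (ha : 0 < a) (hc : 0 ≤ c)
    (L : ℕ) (x : ℕ → Fin N)
    (hstep : ∀ r < L, x r ≠ x (r+1))
    (hβle : ∀ r < L, β ≤ Q (x r) (x (r+1)) / (-(Q (x r) (x r))))
    (hqa : ∀ r < L, 1 ≤ (-(Q (x r) (x r))) * a)
    (hterm : ∀ u, 0 ≤ u → u ≤ S → c ≤ exp (u • Q) (x L) k) :
    ∀ s, (L : ℝ) * a ≤ s → s ≤ S →
      ((1 - Real.exp (-1)) * β) ^ L * c ≤ exp (s • Q) (x 0) k := by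
  induction L generalizing x with
  | zero =>
    intro s hs1 hs2
    simp only [Nat.cast_zero, zero_mul, pow_zero, one_mul] at hs1 ⊢
    exact hterm s hs1 hs2
  | succ L ih =>
    intro s hs1 hs2
    have hLa : (0:ℝ) ≤ (L : ℝ) * a := by positivity
    have haas : a ≤ s := by
      have : (1:ℝ) * a ≤ ((L:ℝ)+1) * a := by nlinarith [Nat.cast_nonneg (α := ℝ) L]
      push_cast at hs1
      nlinarith
    have hsa : 0 ≤ s - a := by
      push_cast at hs1
      nlinarith [Nat.cast_nonneg (α := ℝ) L]
    have hq0 : 0 < -(Q (x 0) (x 0)) := by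
      have h := hqa 0 (Nat.succ_pos L)
      nlinarith
    set c' : ℝ := ((1 - Real.exp (-1)) * β) ^ L * c with hc'def
    have he1 : (0:ℝ) ≤ 1 - Real.exp (-1) := by
      have : Real.exp (-1) ≤ 1 := by
        rw [show (1:ℝ) = Real.exp 0 by simp]
        exact Real.exp_le_exp.2 (by norm_num)
      linarith
    have hc' : 0 ≤ c' := by positivity
    have hg : ∀ u, s - a ≤ u → u ≤ s → c' ≤ exp (u • Q) (x 1) k := by
      intro u hu1 hu2
      refine ih (fun r => x (r+1)) (fun r hr => hstep (r+1) (by omega))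
        (fun r hr => hβle (r+1) (by omega)) (fun r hr => hqa (r+1) (by omega))
        (fun u hu1 hu2 => hterm u hu1 hu2) u ?_ (le_trans hu2 hs2)
      push_cast at hs1 ⊢
      nlinarith
    have hstep0 := exp_step hod (hstep 0 (Nat.succ_pos L)) ha haas hsa hc' hq0 hg
    refine le_trans ?_ hstep0
    have h1 : 1 - Real.exp (-1) ≤ 1 - Real.exp (-(-(Q (x 0) (x 0)) * a)) := by
      have : (-(-(Q (x 0) (x 0)) * a)) ≤ -1 := by
        have := hqa 0 (Nat.succ_pos L); linarith
      have := Real.exp_le_exp.2 this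
      linarith
    have h2 : β ≤ Q (x 0) (x 1) / (-(Q (x 0) (x 0))) := hβle 0 (Nat.succ_pos L)
    have hmul : (1 - Real.exp (-1)) * β ≤
        (1 - Real.exp (-(-(Q (x 0) (x 0)) * a))) * (Q (x 0) (x 1) / (-(Q (x 0) (x 0)))) :=
      mul_le_mul h1 h2 hβ (by linarith)
    calc ((1 - Real.exp (-1)) * β) ^ (L+1) * c
        = ((1 - Real.exp (-1)) * β) * c' := by rw [hc'def]; ring
      _ ≤ ((1 - Real.exp (-(-(Q (x 0) (x 0)) * a))) * (Q (x 0) (x 1) / (-(Q (x 0) (x 0))))) * c' :=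
          mul_le_mul_of_nonneg_right hmul hc'
      _ = (1 - Real.exp (-(-(Q (x 0) (x 0)) * a))) * (Q (x 0) (x 1) / (-(Q (x 0) (x 0)))) * c' := by
          ring

theorem contract_step (A : Matrix (Fin N) (Fin N) ℝ)
    (hA0 : ∀ i j, 0 ≤ A i j) (hA1 : ∀ i, ∑ j, A i j = 1)
    {c : ℝ} (hc : 0 ≤ c) (k : Fin N) (hAk : ∀ i, c ≤ A i k)
    (w : Fin N → ℝ) (hw : ∑ i, w i = 0) :
    ∑ j, |∑ i, w i * A i j| ≤ (1 - c) * ∑ i, |w i| := by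
  classical
  set B : Matrix (Fin N) (Fin N) ℝ :=
    Matrix.of fun i j => A i j - (if j = k then c else 0) with hBdef
  have hB0 : ∀ i j, 0 ≤ B i j := by
    intro i j
    simp only [hBdef, Matrix.of_apply]
    split
    · next h => subst h; have := hAk i; linarith
    · have := hA0 i j; linarith
  have hBsum : ∀ i, ∑ j, B i j = 1 - c := by
    intro i
    simp only [hBdef, Matrix.of_apply, Finset.sum_sub_distrib, hA1, Finset.sum_ite_eq',
      Finset.mem_univ, if_true]
  have hkey : ∀ j, ∑ i, w i * A i j = ∑ i, w i * B i j := by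
    intro j
    simp only [hBdef, Matrix.of_apply, mul_sub, Finset.sum_sub_distrib]
    have : ∑ i, w i * (if j = k then c else 0) = 0 := by
      by_cases h : j = k <;> simp [h, ← Finset.sum_mul, hw]
    rw [this, sub_zero]
  calc ∑ j, |∑ i, w i * A i j| = ∑ j, |∑ i, w i * B i j| := by
        exact Finset.sum_congr rfl fun j _ => by rw [hkey]
    _ ≤ ∑ j, ∑ i, |w i| * B i j := by
        refine Finset.sum_le_sum fun j _ => ?_
        refine le_trans (Finset.abs_sum_le_sum_abs _ _) ?_
        refine Finset.sum_le_sum fun i _ => ?_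
        rw [abs_mul, abs_of_nonneg (hB0 i j)]
    _ = ∑ i, |w i| * ∑ j, B i j := by
        rw [Finset.sum_comm]
        exact Finset.sum_congr rfl fun i _ => by rw [Finset.mul_sum]
    _ = (1 - c) * ∑ i, |w i| := by
        rw [Finset.mul_sum]
        exact Finset.sum_congr rfl fun i _ => by rw [hBsum i]; ring

theorem pow_row_sum {A : Matrix (Fin N) (Fin N) ℝ} (hA1 : ∀ i, ∑ j, A i j = 1)
    (n : ℕ) (i : Fin N) : ∑ j, (A ^ n) i j = 1 := by
  induction n generalizing i with
  | zero => simp [Matrix.one_apply]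
  | succ n ih =>
    simp only [pow_succ, Matrix.mul_apply]
    rw [Finset.sum_comm]
    calc ∑ m, ∑ j, (A ^ n) i m * A m j = ∑ m, (A ^ n) i m * ∑ j, A m j := by
          exact Finset.sum_congr rfl fun m _ => by rw [Finset.mul_sum]
      _ = 1 := by simp only [hA1, mul_one]; exact ih i

theorem iterate_bound (A : Matrix (Fin N) (Fin N) ℝ)
    (hA0 : ∀ i j, 0 ≤ A i j) (hA1 : ∀ i, ∑ j, A i j = 1)
    {c : ℝ} (hc : 0 ≤ c) (k : Fin N) (hAk : ∀ i, c ≤ A i k)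
    (w : Fin N → ℝ) (hw : ∑ i, w i = 0) :
    ∀ n : ℕ, ∑ j, |∑ i, w i * (A ^ n) i j| ≤ (1 - c) ^ n * ∑ i, |w i| := by
  have hc1 : c ≤ 1 := by
    have h1 := hAk k
    have h2 : A k k ≤ ∑ j, A k j :=
      Finset.single_le_sum (f := fun j => A k j) (fun j _ => hA0 k j) (Finset.mem_univ k)
    rw [hA1 k] at h2
    linarith
  intro n
  induction n with
  | zero => simp [Matrix.one_apply, hw]
  | succ n ih =>
    set w' : Fin N → ℝ := fun m => ∑ i, w i * (A ^ n) i m with hw'def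
    have hw' : ∑ m, w' m = 0 := by
      simp only [hw'def]
      rw [Finset.sum_comm]
      calc ∑ i, ∑ m, w i * (A ^ n) i m = ∑ i, w i * ∑ m, (A ^ n) i m := by
            exact Finset.sum_congr rfl fun i _ => by rw [Finset.mul_sum]
        _ = 0 := by simp only [pow_row_sum hA1, mul_one, hw]
    have hrw : ∀ j, ∑ i, w i * (A ^ (n+1)) i j = ∑ m, w' m * A m j := by
      intro j
      simp only [pow_succ, Matrix.mul_apply, hw'def, Finset.mul_sum, Finset.sum_mul]
      rw [Finset.sum_comm]
      exact Finset.sum_congr rfl fun m _ => Finset.sum_congr rfl fun i _ => by ring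
    calc ∑ j, |∑ i, w i * (A ^ (n+1)) i j| = ∑ j, |∑ m, w' m * A m j| := by
          exact Finset.sum_congr rfl fun j _ => by rw [hrw]
      _ ≤ (1 - c) * ∑ m, |w' m| := contract_step A hA0 hA1 hc k hAk w' hw'
      _ ≤ (1 - c) * ((1 - c) ^ n * ∑ i, |w i|) :=
          mul_le_mul_of_nonneg_left ih (by linarith)
      _ = (1 - c) ^ (n+1) * ∑ i, |w i| := by ring

theorem vec_stat_pow {A : Matrix (Fin N) (Fin N) ℝ} {v : Fin N → ℝ}
    (hv : ∀ j, ∑ u, v u * A u j = v j) : ∀ n (j : Fin N), ∑ u, v u * (A ^ n) u j = v j := by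
  intro n
  induction n with
  | zero => intro j; simp [Matrix.one_apply]
  | succ n ih =>
    intro j
    simp only [pow_succ, Matrix.mul_apply, Finset.mul_sum]
    rw [Finset.sum_comm]
    calc ∑ m, ∑ u, v u * ((A ^ n) u m * A m j)
        = ∑ m, (∑ u, v u * (A ^ n) u m) * A m j := by
          refine Finset.sum_congr rfl fun m _ => ?_
          rw [Finset.sum_mul]; exact Finset.sum_congr rfl fun u _ => by ring
      _ = ∑ m, v m * A m j := by
          refine Finset.sum_congr rfl fun m _ => by rw [ih m]
      _ = v j := hv j

theorem exists_path {P : Matrix (Fin N) (Fin N) ℝ} (hP0 : ∀ i j, 0 ≤ P i j) :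
    ∀ n (u v : Fin N), 0 < (P ^ n) u v →
      ∃ x : ℕ → Fin N, x 0 = u ∧ x n = v ∧ ∀ r < n, 0 < P (x r) (x (r+1)) := by
  intro n
  induction n with
  | zero =>
    intro u v h
    simp only [pow_zero, Matrix.one_apply] at h
    split at h
    · next heq => exact ⟨fun _ => u, rfl, by rw [heq], fun r hr => absurd hr (by omega)⟩
    · norm_num at h
  | succ n ih =>
    intro u v h
    rw [pow_succ, Matrix.mul_apply] at h
    have : ∃ m, 0 < (P ^ n) u m * P m v := by
      by_contra hcon
      push_neg at hcon
      have : ∑ m, (P ^ n) u m * P m v ≤ 0 := Finset.sum_nonpos fun m _ => hcon m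
      linarith
    obtain ⟨m, hm⟩ := this
    have h1 : 0 < (P ^ n) u m := by
      rcases lt_or_ge 0 ((P ^ n) u m) with h' | h'
      · exact h'
      · exfalso
        have : (P ^ n) u m = 0 := le_antisymm h' (pow_entry_nonneg hP0 n u m)
        rw [this, zero_mul] at hm; exact lt_irrefl 0 hm
    have h2 : 0 < P m v := by
      rcases lt_or_ge 0 (P m v) with h' | h'
      · exact h'
      · exfalso
        have : P m v = 0 := le_antisymm h' (hP0 m v)
        rw [this, mul_zero] at hm; exact lt_irrefl 0 hm
    obtain ⟨x, hx0, hxn, hxs⟩ := ih u m h1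
    refine ⟨fun r => if r ≤ n then x r else v, by simpa using hx0, by simp, ?_⟩
    intro r hr
    rcases Nat.lt_or_ge r n with h' | h'
    · simpa [Nat.le_of_lt h', Nat.succ_le_of_lt h'] using hxs r h'
    · have hrn : r = n := by omega
      subst hrn
      simpa [Nat.lt_irrefl, hxn] using h2

end Aux

section Main

open NormedSpace

set_option maxHeartbeats 2000000 in
/-- For an asymptotically regular family with irreducible skeleton chain, if
`T̄(ε) ≪ t(ε)`, then `P_i(X^ε_{t(ε)} = j) → μ(j)` (the limiting stationary
distribution), where the transition probabilities of `X^ε` at time `t` are given by the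
matrix exponential `exp(t Q(ε))` of the generator. -/
theorem stmt13 (N : ℕ) (hN : 2 ≤ N) (q : ℝ → Fin N → Fin N → ℝ)
    (hpos : ∀ ε > (0:ℝ), ∀ i j, i ≠ j → 0 < q ε i j)
    (hAR : ∀ i j k l : Fin N, i ≠ j → k ≠ l → ∃ L : ENNReal,
      Tendsto (fun ε => ENNReal.ofReal (q ε i j / q ε k l)) (𝓝[>] (0:ℝ)) (𝓝 L))
    (P : Matrix (Fin N) (Fin N) ℝ) (hPdiag : ∀ i, P i i = 0)
    (hP : ∀ i j : Fin N, i ≠ j → Tendsto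
      (fun ε => q ε i j / ∑ j' ∈ Finset.univ.erase i, q ε i j')
      (𝓝[>] (0:ℝ)) (𝓝 (P i j)))
    (hirr : ∀ i j : Fin N, ∃ n : ℕ, 0 < (P ^ n) i j)
    (lam : Fin N → ℝ)
    (hlamnn : ∀ i, 0 ≤ lam i) (hlam1 : ∑ i, lam i = 1)
    (hlamstat : ∀ j, ∑ i, lam i * P i j = lam j)
    (μ : ℝ → Fin N → ℝ)
    (hμ : ∀ ε > (0:ℝ), (∀ i, 0 ≤ μ ε i) ∧ (∑ i, μ ε i = 1) ∧
      ∀ j, ∑ i ∈ Finset.univ.erase j, μ ε i * q ε i j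
        = μ ε j * ∑ k ∈ Finset.univ.erase j, q ε j k)
    (μ₀ : Fin N → ℝ)
    (hμ₀ : ∀ j, Tendsto (fun ε => μ ε j) (𝓝[>] (0:ℝ)) (𝓝 (μ₀ j)))
    (t : ℝ → ℝ) (ht : ∀ ε > (0:ℝ), 0 < t ε)
    -- `T̄(ε) ≪ t(ε)`:
    (htT : Tendsto (fun ε =>
        (∑ i, lam i * (∑ j ∈ Finset.univ.erase i, q ε i j)⁻¹) / t ε)
      (𝓝[>] (0:ℝ)) (𝓝 0)) :
    ∀ i j : Fin N, Tendsto
      (fun ε => NormedSpace.exp (t ε • generator (q ε)) i j)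
      (𝓝[>] (0:ℝ)) (𝓝 (μ₀ j)) := by
  classical
  haveI : Nontrivial (Fin N) :=
    ⟨⟨⟨0, by omega⟩, ⟨1, by omega⟩, by simp [Fin.ext_iff]⟩⟩
  have hqsum_pos : ∀ ε : ℝ, 0 < ε → ∀ u : Fin N, 0 < ∑ w ∈ univ.erase u, q ε u w := by
    intro ε hε u
    obtain ⟨v, hv⟩ := exists_ne u
    refine Finset.sum_pos (fun w hw => hpos ε hε u w (Finset.ne_of_mem_erase hw).symm)
      ⟨v, Finset.mem_erase.2 ⟨hv, Finset.mem_univ v⟩⟩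
  have hP0 : ∀ u v : Fin N, 0 ≤ P u v := by
    intro u v
    rcases eq_or_ne u v with rfl | h
    · rw [hPdiag]
    · refine ge_of_tendsto (hP u v h) ?_
      filter_upwards [self_mem_nhdsWithin] with ε hε
      exact div_nonneg (hpos ε hε u v h).le (hqsum_pos ε hε u).le
  have hlam_statn : ∀ n (j : Fin N), ∑ u, lam u * (P ^ n) u j = lam j :=
    vec_stat_pow hlamstat
  have hlampos : ∀ v, 0 < lam v := by
    have hex : ∃ u, 0 < lam u := by
      by_contra hcon
      push_neg at hcon
      have h0 : ∑ u, lam u = 0 :=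
        le_antisymm (Finset.sum_nonpos fun u _ => hcon u)
          (Finset.sum_nonneg fun u _ => hlamnn u)
      rw [hlam1] at h0; norm_num at h0
    obtain ⟨u₀, hu₀⟩ := hex
    intro v
    obtain ⟨n, hn⟩ := hirr u₀ v
    have h1 : lam u₀ * (P ^ n) u₀ v ≤ ∑ u, lam u * (P ^ n) u v :=
      Finset.single_le_sum (f := fun u => lam u * (P ^ n) u v)
        (fun u _ => mul_nonneg (hlamnn u) (pow_entry_nonneg hP0 n u v))
        (Finset.mem_univ u₀)
    rw [hlam_statn n v] at h1
    nlinarith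
  obtain ⟨umin, _, hum⟩ := Finset.exists_min_image Finset.univ lam
    ⟨⟨0, by omega⟩, Finset.mem_univ _⟩
  set lmin : ℝ := lam umin with hlmindef
  have hlmin_pos : 0 < lmin := hlampos umin
  have hlmin_le : ∀ u, lmin ≤ lam u := fun u => hum u (Finset.mem_univ u)
  choose npath hnp using hirr
  have hpaths : ∀ u v : Fin N, ∃ x : ℕ → Fin N, x 0 = u ∧ x (npath u v) = v ∧
      ∀ r < npath u v, 0 < P (x r) (x (r+1)) :=
    fun u v => exists_path hP0 (npath u v) u v (hnp u v)
  choose Xp hX0 hXe hXs using hpaths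
  set Lmax : ℕ := Finset.univ.sup (fun u : Fin N => Finset.univ.sup fun v : Fin N => npath u v)
    with hLmaxdef
  have hnle : ∀ u v, npath u v ≤ Lmax := fun u v =>
    le_trans (Finset.le_sup (f := fun v => npath u v) (Finset.mem_univ v))
      (Finset.le_sup (f := fun u => Finset.univ.sup fun v => npath u v) (Finset.mem_univ u))
  set Spos : Finset (Fin N × Fin N) :=
    Finset.univ.filter (fun p : Fin N × Fin N => 0 < P p.1 p.2) with hSposdef
  have hSpos_ne : Spos.Nonempty := by
    set u : Fin N := ⟨0, by omega⟩
    set v : Fin N := ⟨1, by omega⟩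
    have h01 : u ≠ v := by simp [u, v, Fin.ext_iff]
    have hn1 : 1 ≤ npath u v := by
      by_contra hcon
      push_neg at hcon
      have h0 : npath u v = 0 := by omega
      have hh := hnp u v
      rw [h0] at hh
      simp [Matrix.one_apply, h01] at hh
    refine ⟨(Xp u v 0, Xp u v 1), ?_⟩
    simp only [hSposdef, Finset.mem_filter, Finset.mem_univ, true_and]
    exact hXs u v 0 (by omega)
  obtain ⟨pmin, hpmin_mem, hpmin_le⟩ :=
    Finset.exists_min_image Spos (fun p => P p.1 p.2) hSpos_ne
  set β0 : ℝ := P pmin.1 pmin.2 with hβ0def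
  have hβ0pos : 0 < β0 := by
    have h := hpmin_mem
    simp only [hSposdef, Finset.mem_filter] at h
    exact h.2
  set β : ℝ := min (β0/2) (1/2) with hβdef
  have hβpos : 0 < β := lt_min (by linarith) (by norm_num)
  have hβhalf : β ≤ 1/2 := min_le_right _ _
  have hEv : ∀ᶠ ε in 𝓝[>] (0:ℝ), ∀ p ∈ Spos,
      β ≤ q ε p.1 p.2 / ∑ w ∈ univ.erase p.1, q ε p.1 w := by
    rw [Filter.eventually_all_finset]
    intro p hp
    have hPp : 0 < P p.1 p.2 := by
      simp only [hSposdef, Finset.mem_filter] at hp; exact hp.2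
    have hne : p.1 ≠ p.2 := by
      intro h; rw [h, hPdiag] at hPp; exact lt_irrefl 0 hPp
    have hβlt : β < P p.1 p.2 := by
      have h1 : β0 ≤ P p.1 p.2 := hpmin_le p hp
      have h2 : β ≤ β0 / 2 := min_le_left _ _
      linarith
    exact (hP p.1 p.2 hne).eventually (eventually_ge_nhds hβlt)
  set M : ℝ := ((Lmax : ℝ) + 1) / lmin with hMdef
  have hMpos : 0 < M := by positivity
  have he1 : (0:ℝ) < 1 - Real.exp (-1) := by
    have : Real.exp (-1) < 1 := by
      rw [show (1:ℝ) = Real.exp 0 by simp]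
      exact Real.exp_lt_exp.2 (by norm_num)
    linarith
  set base : ℝ := (1 - Real.exp (-1)) * β with hbasedef
  have hbasepos : 0 < base := mul_pos he1 hβpos
  have hbase1 : base ≤ 1 := by nlinarith [Real.exp_pos (-1)]
  set cD : ℝ := base ^ Lmax * Real.exp (-M) with hcDdef
  have hcDpos : 0 < cD := by positivity
  have hcD1 : cD ≤ 1 := by
    have h1 : base ^ Lmax ≤ 1 := by
      calc base ^ Lmax ≤ 1 ^ Lmax := pow_le_pow_left₀ hbasepos.le hbase1 Lmax
        _ = 1 := one_pow _
    have h2 : Real.exp (-M) ≤ 1 := by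
      rw [show (1:ℝ) = Real.exp 0 by simp]
      exact Real.exp_le_exp.2 (by linarith)
    nlinarith [Real.exp_pos (-M), pow_nonneg hbasepos.le Lmax]
  set Tbar : ℝ → ℝ := fun ε => ∑ u, lam u * (∑ w ∈ univ.erase u, q ε u w)⁻¹ with hTbardef
  have hTbarpos : ∀ ε : ℝ, 0 < ε → 0 < Tbar ε := fun ε hε =>
    Finset.sum_pos (fun u _ => mul_pos (hlampos u) (inv_pos.2 (hqsum_pos ε hε u)))
      ⟨⟨0, by omega⟩, Finset.mem_univ _⟩
  intro i j
  -- the key quantitative bound for a fixed ε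
  have key : ∀ ε : ℝ, 0 < ε →
      (∀ p ∈ Spos, β ≤ q ε p.1 p.2 / ∑ w ∈ univ.erase p.1, q ε p.1 w) →
      |NormedSpace.exp (t ε • generator (q ε)) i j - μ ε j|
        ≤ 2 * (1 - cD) ^ (Nat.floor (t ε / (M * Tbar ε))) := by
    intro ε hε hratio
    set Q : Matrix (Fin N) (Fin N) ℝ := generator (q ε) with hQdef
    set qs : Fin N → ℝ := fun u => ∑ w ∈ univ.erase u, q ε u w with hqsdef
    have hqs : ∀ u, 0 < qs u := hqsum_pos ε hε
    have hQoff : ∀ u v : Fin N, u ≠ v → Q u v = q ε u v := by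
      intro u v h; simp [hQdef, generator, Matrix.of_apply, h]
    have hQdiag : ∀ u, Q u u = -(qs u) := by
      intro u; simp [hQdef, generator, Matrix.of_apply, hqsdef]
    have hod : ∀ u v : Fin N, u ≠ v → 0 ≤ Q u v := by
      intro u v h; rw [hQoff u v h]; exact (hpos ε hε u v h).le
    have hrowQ : ∀ u, ∑ v, Q u v = 0 := by
      intro u
      rw [← Finset.add_sum_erase _ _ (Finset.mem_univ u), hQdiag]
      have h : ∑ v ∈ univ.erase u, Q u v = qs u := by
        rw [hqsdef]
        exact Finset.sum_congr rfl fun v hv => hQoff u v (Finset.ne_of_mem_erase hv).symm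
      rw [h]; ring
    obtain ⟨k, _, hkmax⟩ := Finset.exists_max_image Finset.univ (fun u => (qs u)⁻¹)
      ⟨⟨0, by omega⟩, Finset.mem_univ _⟩
    have hk' : ∀ u, (qs u)⁻¹ ≤ (qs k)⁻¹ := fun u => hkmax u (Finset.mem_univ u)
    have hTbar_eq : Tbar ε = ∑ u, lam u * (qs u)⁻¹ := rfl
    have hTbar_le : Tbar ε ≤ (qs k)⁻¹ := by
      rw [hTbar_eq]
      calc ∑ u, lam u * (qs u)⁻¹ ≤ ∑ u, lam u * (qs k)⁻¹ :=
            Finset.sum_le_sum fun u _ => mul_le_mul_of_nonneg_left (hk' u) (hlamnn u)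
        _ = (qs k)⁻¹ := by rw [← Finset.sum_mul, hlam1, one_mul]
    have hTbar_ge : ∀ u, lmin * (qs u)⁻¹ ≤ Tbar ε := by
      intro u
      have h1 : lam u * (qs u)⁻¹ ≤ Tbar ε := by
        rw [hTbar_eq]
        exact Finset.single_le_sum (f := fun u => lam u * (qs u)⁻¹)
          (fun u _ => (mul_pos (hlampos u) (inv_pos.2 (hqs u))).le) (Finset.mem_univ u)
      have h2 : lmin * (qs u)⁻¹ ≤ lam u * (qs u)⁻¹ :=
        mul_le_mul_of_nonneg_right (hlmin_le u) (inv_pos.2 (hqs u)).le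
      linarith
    have hTb := hTbarpos ε hε
    set S : ℝ := M * Tbar ε with hSdef
    have hSpos' : 0 < S := mul_pos hMpos hTb
    set a : ℝ := Tbar ε / lmin with hadef
    have hapos : 0 < a := div_pos hTb hlmin_pos
    have hSa : ((Lmax:ℝ) + 1) * a = S := by
      rw [hadef, hSdef, hMdef]; field_simp
    have hqa_all : ∀ u, 1 ≤ qs u * a := by
      intro u
      rw [hadef]
      rw [show qs u * (Tbar ε / lmin) = qs u * Tbar ε / lmin from by ring]
      rw [one_le_div hlmin_pos]
      have h3 := mul_le_mul_of_nonneg_left (hTbar_ge u) (hqs u).le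
      have h4 : qs u * (lmin * (qs u)⁻¹) = lmin := by
        rw [mul_comm lmin ((qs u)⁻¹), ← mul_assoc, mul_inv_cancel₀ (hqs u).ne', one_mul]
      linarith
    have hDoeb : ∀ u : Fin N, cD ≤ exp (S • Q) u k := by
      intro u
      have hterm : ∀ u', 0 ≤ u' → u' ≤ S →
          Real.exp (-M) ≤ exp (u' • Q) (Xp u k (npath u k)) k := by
        intro u' h0 hu'
        rw [hXe u k]
        refine le_trans ?_ (exp_diag_ge hod k h0)
        apply Real.exp_le_exp.2
        rw [hQdiag k]
        have h1 : qs k * u' ≤ qs k * S := mul_le_mul_of_nonneg_left hu' (hqs k).le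
        have h2 : qs k * S ≤ M := by
          rw [hSdef]
          have h3 : qs k * (M * Tbar ε) ≤ qs k * (M * (qs k)⁻¹) := by
            apply mul_le_mul_of_nonneg_left _ (hqs k).le
            exact mul_le_mul_of_nonneg_left hTbar_le hMpos.le
          have h4 : qs k * (M * (qs k)⁻¹) = M := by
            rw [mul_comm M ((qs k)⁻¹), ← mul_assoc, mul_inv_cancel₀ (hqs k).ne', one_mul]
          linarith
        nlinarith
      have hstep' : ∀ r < npath u k, Xp u k r ≠ Xp u k (r+1) := by
        intro r hr heq
        have h := hXs u k r hr
        rw [heq, hPdiag] at h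
        exact lt_irrefl 0 h
      have hβle' : ∀ r < npath u k,
          β ≤ Q (Xp u k r) (Xp u k (r+1)) / (-(Q (Xp u k r) (Xp u k r))) := by
        intro r hr
        have hne := hstep' r hr
        rw [hQoff _ _ hne, hQdiag, neg_neg]
        exact hratio (Xp u k r, Xp u k (r+1))
          (by simp only [hSposdef, Finset.mem_filter, Finset.mem_univ, true_and]
              exact hXs u k r hr)
      have hqa' : ∀ r < npath u k, 1 ≤ (-(Q (Xp u k r) (Xp u k r))) * a := by
        intro r hr; rw [hQdiag, neg_neg]; exact hqa_all _
      have hLa : ((npath u k : ℝ)) * a ≤ S := by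
        have h1 : (npath u k : ℝ) ≤ (Lmax : ℝ) := Nat.cast_le.2 (hnle u k)
        nlinarith [hSa, hapos]
      have hpb := path_bound hod hβpos.le hapos (Real.exp_pos (-M)).le (npath u k) (Xp u k)
        hstep' hβle' hqa' hterm S hLa (le_refl S)
      rw [hX0 u k] at hpb
      refine le_trans ?_ hpb
      rw [hcDdef, hbasedef]
      exact mul_le_mul_of_nonneg_right
        (pow_le_pow_of_le_one hbasepos.le hbase1 (hnle u k)) (Real.exp_pos (-M)).le
    have hrowSQ : ∀ u, ∑ v, (S • Q) u v = 0 := by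
      intro u
      simp only [Matrix.smul_apply, smul_eq_mul, ← Finset.mul_sum, hrowQ, mul_zero]
    have htpos := ht ε hε
    set n₀ : ℕ := Nat.floor (t ε / S) with hn₀def
    have hn₀le : (n₀ : ℝ) * S ≤ t ε := by
      have h1 : (n₀ : ℝ) ≤ t ε / S := Nat.floor_le (by positivity)
      exact (le_div_iff₀ hSpos').1 h1
    set rr : ℝ := t ε - n₀ * S with hrdef
    have hr0 : 0 ≤ rr := by rw [hrdef]; linarith
    have hrowrQ : ∀ u, ∑ v, (rr • Q) u v = 0 := by
      intro u
      simp only [Matrix.smul_apply, smul_eq_mul, ← Finset.mul_sum, hrowQ, mul_zero]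
    set A : Matrix (Fin N) (Fin N) ℝ := exp (S • Q) with hAdef
    set B : Matrix (Fin N) (Fin N) ℝ := exp (rr • Q) with hBdef
    have hA0 : ∀ u v, 0 ≤ A u v := fun u v => exp_entry_nonneg' hod hSpos'.le u v
    have hA1 : ∀ u, ∑ v, A u v = 1 := fun u => exp_row_sum hrowSQ u
    have hB0 : ∀ u v, 0 ≤ B u v := fun u v => exp_entry_nonneg' hod hr0 u v
    have hB1 : ∀ u, ∑ v, B u v = 1 := fun u => exp_row_sum hrowrQ u
    have hsplit : exp (t ε • Q) = A ^ n₀ * B := by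
      have h1 : t ε • Q = ((n₀ : ℝ) * S) • Q + rr • Q := by
        rw [← add_smul, hrdef]; ring_nf
      have hcomm : Commute (((n₀ : ℝ) * S) • Q) (rr • Q) :=
        ((Commute.refl Q).smul_left _).smul_right _
      rw [h1, Matrix.exp_add_of_commute _ _ hcomm]
      congr 1
      rw [hAdef, show ((n₀ : ℝ) * S) • Q = (n₀ : ℕ) • (S • Q) from by
        rw [← smul_smul, Nat.cast_smul_eq_nsmul]]
      exact Matrix.exp_nsmul _ _
    obtain ⟨hμnn, hμ1, hμbal⟩ := hμ ε hε
    have hbalQ : ∀ v, ∑ u, μ ε u * Q u v = 0 := by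
      intro v
      rw [← Finset.add_sum_erase _ _ (Finset.mem_univ v), hQdiag v]
      have h1 : ∑ u ∈ univ.erase v, μ ε u * Q u v = μ ε v * qs v := by
        have h2 : ∑ u ∈ univ.erase v, μ ε u * Q u v
            = ∑ u ∈ univ.erase v, μ ε u * q ε u v :=
          Finset.sum_congr rfl fun u hu => by rw [hQoff u v (Finset.ne_of_mem_erase hu)]
        rw [h2, hμbal v]
      rw [h1]; ring
    have hstatSQ : ∀ v, ∑ u, μ ε u * (S • Q) u v = 0 := by
      intro v
      simp only [Matrix.smul_apply, smul_eq_mul]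
      calc ∑ u, μ ε u * (S * Q u v) = S * ∑ u, μ ε u * Q u v := by
            rw [Finset.mul_sum]; exact Finset.sum_congr rfl fun u _ => by ring
        _ = 0 := by rw [hbalQ v, mul_zero]
    have hstatrQ : ∀ v, ∑ u, μ ε u * (rr • Q) u v = 0 := by
      intro v
      simp only [Matrix.smul_apply, smul_eq_mul]
      calc ∑ u, μ ε u * (rr * Q u v) = rr * ∑ u, μ ε u * Q u v := by
            rw [Finset.mul_sum]; exact Finset.sum_congr rfl fun u _ => by ring
        _ = 0 := by rw [hbalQ v, mul_zero]
    have hstatA : ∀ v, ∑ u, μ ε u * A u v = μ ε v := fun v => exp_vecMul_eq hstatSQ v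
    have hstatB : ∀ v, ∑ u, μ ε u * B u v = μ ε v := fun v => exp_vecMul_eq hstatrQ v
    have hstatAn : ∀ v, ∑ u, μ ε u * (A ^ n₀) u v = μ ε v := vec_stat_pow hstatA n₀
    have hstatAB : ∑ u, μ ε u * (A ^ n₀ * B) u j = μ ε j := by
      simp only [Matrix.mul_apply, Finset.mul_sum]
      rw [Finset.sum_comm]
      calc ∑ m, ∑ u, μ ε u * ((A ^ n₀) u m * B m j)
          = ∑ m, (∑ u, μ ε u * (A ^ n₀) u m) * B m j := by
            refine Finset.sum_congr rfl fun m _ => ?_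
            rw [Finset.sum_mul]; exact Finset.sum_congr rfl fun u _ => by ring
        _ = ∑ m, μ ε m * B m j := Finset.sum_congr rfl fun m _ => by rw [hstatAn m]
        _ = μ ε j := hstatB j
    set w : Fin N → ℝ := fun m => (if m = i then (1:ℝ) else 0) - μ ε m with hwdef
    have hw : ∑ m, w m = 0 := by
      simp only [hwdef, Finset.sum_sub_distrib, Finset.sum_ite_eq', Finset.mem_univ,
        if_true, hμ1]
      norm_num
    have hwabs : ∑ m, |w m| ≤ 2 := by
      calc ∑ m, |w m| ≤ ∑ m, ((if m = i then (1:ℝ) else 0) + μ ε m) := by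
            refine Finset.sum_le_sum fun m _ => ?_
            rw [hwdef]
            calc |(if m = i then (1:ℝ) else 0) - μ ε m|
                ≤ |if m = i then (1:ℝ) else 0| + |μ ε m| := by
                  rw [sub_eq_add_neg]
                  exact (abs_add_le _ _).trans_eq (by rw [abs_neg])
              _ = (if m = i then (1:ℝ) else 0) + μ ε m := by
                  rw [abs_of_nonneg (by split <;> norm_num), abs_of_nonneg (hμnn m)]
        _ = 2 := by
            rw [Finset.sum_add_distrib, Finset.sum_ite_eq', hμ1]
            norm_num
    have hδ : ∑ u, (if u = i then (1:ℝ) else 0) * (A ^ n₀ * B) u j = (A ^ n₀ * B) i j := by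
      simp [ite_mul]
    have hEij : exp (t ε • Q) i j - μ ε j = ∑ u, w u * (A ^ n₀ * B) u j := by
      have h1 : ∑ u, w u * (A ^ n₀ * B) u j
          = ∑ u, (if u = i then (1:ℝ) else 0) * (A ^ n₀ * B) u j
            - ∑ u, μ ε u * (A ^ n₀ * B) u j := by
        rw [← Finset.sum_sub_distrib]
        exact Finset.sum_congr rfl fun u _ => by rw [hwdef]; ring
      rw [h1, hδ, hstatAB, hsplit]
    set w' : Fin N → ℝ := fun m => ∑ u, w u * (A ^ n₀) u m with hw'def
    have hw'sum : ∑ m, w' m = 0 := by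
      simp only [hw'def]
      rw [Finset.sum_comm]
      calc ∑ u, ∑ m, w u * (A ^ n₀) u m = ∑ u, w u * ∑ m, (A ^ n₀) u m :=
            Finset.sum_congr rfl fun u _ => (Finset.mul_sum _ _ _).symm
        _ = 0 := by simp only [pow_row_sum hA1, mul_one]; exact hw
    have h1 : ∑ v, |∑ m, w' m * B m v| ≤ (1 - 0) * ∑ m, |w' m| :=
      contract_step B hB0 hB1 (le_refl 0) k (fun u => hB0 u k) w' hw'sum
    have h2 : ∑ m, |w' m| ≤ (1 - cD) ^ n₀ * ∑ m, |w m| :=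
      iterate_bound A hA0 hA1 hcDpos.le k hDoeb w hw n₀
    have h3 : ∑ u, w u * (A ^ n₀ * B) u j = ∑ m, w' m * B m j := by
      simp only [Matrix.mul_apply, Finset.mul_sum, hw'def]
      rw [Finset.sum_comm]
      refine Finset.sum_congr rfl fun m _ => ?_
      rw [Finset.sum_mul]
      exact Finset.sum_congr rfl fun u _ => by ring
    calc |exp (t ε • Q) i j - μ ε j| = |∑ m, w' m * B m j| := by rw [hEij, h3]
      _ ≤ ∑ v, |∑ m, w' m * B m v| :=
          Finset.single_le_sum (f := fun v => |∑ m, w' m * B m v|)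
            (fun v _ => abs_nonneg _) (Finset.mem_univ j)
      _ ≤ (1 - 0) * ∑ m, |w' m| := h1
      _ = ∑ m, |w' m| := by ring
      _ ≤ (1 - cD) ^ n₀ * ∑ m, |w m| := h2
      _ ≤ (1 - cD) ^ n₀ * 2 :=
          mul_le_mul_of_nonneg_left hwabs (pow_nonneg (by linarith) n₀)
      _ = 2 * (1 - cD) ^ n₀ := by ring
  -- pass to the limit
  have hn₀tend : Tendsto (fun ε => Nat.floor (t ε / (M * Tbar ε))) (𝓝[>] (0:ℝ)) atTop := by
    apply tendsto_nat_floor_atTop.comp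
    have h1 : Tendsto (fun ε => Tbar ε / t ε) (𝓝[>] (0:ℝ)) (𝓝[>] 0) := by
      rw [tendsto_nhdsWithin_iff]
      constructor
      · exact htT
      · filter_upwards [self_mem_nhdsWithin] with ε hε
        exact Set.mem_Ioi.2 (div_pos (hTbarpos ε hε) (ht ε hε))
    have h2 : Tendsto (fun ε => (Tbar ε / t ε)⁻¹) (𝓝[>] (0:ℝ)) atTop :=
      tendsto_inv_nhdsGT_zero.comp h1
    have h3 : Tendsto (fun ε => t ε / Tbar ε) (𝓝[>] (0:ℝ)) atTop := by
      simpa [inv_div] using h2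
    have h4 : (fun ε => t ε / (M * Tbar ε)) = fun ε => (t ε / Tbar ε) / M := by
      funext ε
      rw [div_div, mul_comm]
    rw [h4]
    exact h3.atTop_div_const hMpos
  have hgtend : Tendsto (fun ε => 2 * (1 - cD) ^ (Nat.floor (t ε / (M * Tbar ε))))
      (𝓝[>] (0:ℝ)) (𝓝 0) := by
    have hb0 : (0:ℝ) ≤ 1 - cD := by linarith
    have hb1 : 1 - cD < 1 := by linarith
    have h5 : Tendsto (fun n : ℕ => (1 - cD) ^ n) atTop (𝓝 0) :=
      tendsto_pow_atTop_nhds_zero_of_lt_one hb0 hb1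
    have h6 := (h5.comp hn₀tend).const_mul (2:ℝ)
    simpa using h6
  have hdiff : Tendsto (fun ε => NormedSpace.exp (t ε • generator (q ε)) i j - μ ε j)
      (𝓝[>] (0:ℝ)) (𝓝 0) := by
    apply squeeze_zero_norm' ?_ hgtend
    filter_upwards [hEv, self_mem_nhdsWithin] with ε hev hε
    simpa [Real.norm_eq_abs] using key ε hε hev
  have hfin := hdiff.add (hμ₀ j)
  simpa [sub_add_cancel] using hfin

end Main
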